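/- Suppose there exists a constant λ > 0 such that every Boolean function g : {-1,1}^m → {-1,1} (for every m) satisfies H(ĝ²) ≤ λ·C¹(g). Then Mansour's conjecture holds with explicit bounds: for every t-term DNF f : {-1,1}^n → {-1,1} and every ε ∈ (0,1), there exists a multilinear polynomial p : {-1,1}^n → ℝ with at most (16t/ε)^{4λ/ε} nonzero Fourier coefficients such that E_x[(f(x) − p(x))²] ≤ ε. -/

import Mathlib

open Finset

/-- The real value (`1` or `-1`) encoded by a Boolean. -/
noncomputable def bsgn (b : Bool) : ℝ := if b then 1 else -1

/-- The character `χ_S(x) = ∏_{i ∈ S} x_i` on the hypercube `{-1,1}^n`. -/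
noncomputable def chi {n : ℕ} (S : Finset (Fin n)) (x : Fin n → Bool) : ℝ :=
  ∏ i ∈ S, bsgn (x i)

/-- The Fourier coefficient `f̂(S) = E_x [f(x)·χ_S(x)]`. -/
noncomputable def fCoeff {n : ℕ} (f : (Fin n → Bool) → ℝ) (S : Finset (Fin n)) : ℝ :=
  (∑ x : Fin n → Bool, f x * chi S x) / 2 ^ n

/-- The Fourier (Shannon) entropy `H(f̂²) = Σ_S f̂(S)² log₂(1/f̂(S)²)`. -/
noncomputable def fEntropy {n : ℕ} (f : (Fin n → Bool) → ℝ) : ℝ :=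
  ∑ S : Finset (Fin n), (fCoeff f S) ^ 2 * Real.logb 2 (1 / (fCoeff f S) ^ 2)

/-- The Fourier min-entropy `H_∞(f̂²) = min_{S : f̂(S) ≠ 0} log₂(1/f̂(S)²)`. -/
noncomputable def fMinEntropy {n : ℕ} (f : (Fin n → Bool) → ℝ) : ℝ :=
  sInf {y : ℝ | ∃ S : Finset (Fin n),
    fCoeff f S ≠ 0 ∧ y = Real.logb 2 (1 / (fCoeff f S) ^ 2)}

/-- The total influence `Inf(f) = Σ_S |S|·f̂(S)²`. -/
noncomputable def totalInf {n : ℕ} (f : (Fin n → Bool) → ℝ) : ℝ :=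
  ∑ S : Finset (Fin n), (S.card : ℝ) * (fCoeff f S) ^ 2

/-- `f` is a Boolean (`±1`-valued) function. -/
def IsBooleanFunc {n : ℕ} (f : (Fin n → Bool) → ℝ) : Prop := ∀ x, f x = 1 ∨ f x = -1

/-- The certificate complexity of `g` at `x`: the minimum size of a set `B` of coordinates
such that every `y` agreeing with `x` on `B` satisfies `g y = g x`. -/
noncomputable def certAt {m : ℕ} (g : (Fin m → Bool) → ℝ) (x : Fin m → Bool) : ℕ :=
  sInf {c : ℕ | ∃ B : Finset (Fin m), B.card = c ∧
    ∀ y : Fin m → Bool, (∀ i ∈ B, y i = x i) → g y = g x}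

/-- The 1-certificate complexity `C¹(g)`: the maximum of `certAt g x` over inputs `x` with
`g x = -1` (and `0` if there is no such input). -/
noncomputable def oneCert {m : ℕ} (g : (Fin m → Bool) → ℝ) : ℕ :=
  (Finset.univ.filter (fun x : Fin m → Bool => g x = -1)).sup (fun x => certAt g x)

lemma sum_bool_bsgn : ∑ b : Bool, bsgn b = 0 := by simp [bsgn]

lemma bsgn_mul_self (b : Bool) : bsgn b * bsgn b = 1 := by cases b <;> simp [bsgn]

lemma chi_eq_prod_univ {n : ℕ} (S : Finset (Fin n)) (x : Fin n → Bool) :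
    chi S x = ∏ i : Fin n, (if i ∈ S then bsgn (x i) else 1) := by
  rw [chi, Finset.prod_ite_mem, univ_inter]

/-- Orthogonality of characters. -/
lemma sum_chi_mul_chi {n : ℕ} (S S' : Finset (Fin n)) :
    ∑ x : Fin n → Bool, chi S x * chi S' x = if S = S' then (2:ℝ)^n else 0 := by
  have key : ∀ x : Fin n → Bool, chi S x * chi S' x =
      ∏ i : Fin n, ((if i ∈ S then bsgn (x i) else 1) * (if i ∈ S' then bsgn (x i) else 1)) := by
    intro x
    rw [chi_eq_prod_univ, chi_eq_prod_univ, ← Finset.prod_mul_distrib]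
  simp only [key]
  have swap : ∑ x : Fin n → Bool, ∏ i : Fin n,
        ((if i ∈ S then bsgn (x i) else 1) * (if i ∈ S' then bsgn (x i) else 1))
      = ∏ i : Fin n, ∑ b : Bool,
        ((if i ∈ S then bsgn b else 1) * (if i ∈ S' then bsgn b else 1)) := by
    rw [Finset.prod_univ_sum (fun _ => (univ : Finset Bool))]
    rw [Fintype.piFinset_univ]
  rw [swap]
  by_cases h : S = S'
  · subst h
    simp only [if_pos]
    have : ∀ i : Fin n, (∑ b : Bool, ((if i ∈ S then bsgn b else 1) * (if i ∈ S then bsgn b else 1))) = 2 := by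
      intro i
      by_cases hi : i ∈ S <;> simp [hi, bsgn] <;> norm_num
    rw [Finset.prod_congr rfl (fun i _ => this i)]
    simp
  · rw [if_neg h]
    have : ∃ i : Fin n, (i ∈ S ∧ i ∉ S') ∨ (i ∈ S' ∧ i ∉ S) := by
      by_contra hc
      push_neg at hc
      apply h
      ext i
      have := hc i
      tauto
    obtain ⟨i, hi⟩ := this
    apply Finset.prod_eq_zero (Finset.mem_univ i)
    rcases hi with ⟨h1, h2⟩ | ⟨h1, h2⟩ <;> simp [h1, h2, bsgn]

/-- Dual orthogonality. -/
lemma sum_chi_apply {n : ℕ} (x y : Fin n → Bool) :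
    ∑ S : Finset (Fin n), chi S x * chi S y = if x = y then (2:ℝ)^n else 0 := by
  have key : ∀ S : Finset (Fin n), chi S x * chi S y =
      (∏ i ∈ S, bsgn (x i) * bsgn (y i)) * ∏ i ∈ (univ : Finset (Fin n)) \ S, 1 := by
    intro S; rw [chi, chi, ← Finset.prod_mul_distrib]; simp
  simp only [key]
  rw [← Finset.powerset_univ, ← Finset.prod_add]
  by_cases h : x = y
  · subst h
    rw [if_pos rfl]
    have : ∀ i : Fin n, bsgn (x i) * bsgn (x i) + 1 = 2 := by
      intro i; rw [bsgn_mul_self]; norm_num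
    rw [Finset.prod_congr rfl (fun i _ => this i)]
    simp
  · rw [if_neg h]
    obtain ⟨i, hi⟩ : ∃ i, x i ≠ y i := by
      by_contra hc; push_neg at hc; exact h (funext hc)
    apply Finset.prod_eq_zero (Finset.mem_univ i)
    cases hx : x i <;> cases hy : y i <;> simp_all [bsgn]

/-- Fourier inversion. -/
lemma fourier_inversion {n : ℕ} (g : (Fin n → Bool) → ℝ) (x : Fin n → Bool) :
    ∑ S : Finset (Fin n), fCoeff g S * chi S x = g x := by
  simp only [fCoeff, div_mul_eq_mul_div, Finset.sum_mul]
  rw [← Finset.sum_div]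
  rw [Finset.sum_comm]
  have : ∀ y : Fin n → Bool, ∑ S : Finset (Fin n), g y * chi S y * chi S x
      = g y * if y = x then (2:ℝ)^n else 0 := by
    intro y
    rw [← sum_chi_apply y x, Finset.mul_sum]
    congr 1; ext S; ring
  rw [Finset.sum_congr rfl (fun y _ => this y)]
  have : (∑ y : Fin n → Bool, g y * if y = x then (2:ℝ)^n else 0)
      = ∑ y : Fin n → Bool, if y = x then g y * (2:ℝ)^n else 0 := by
    congr 1; ext y; by_cases h : y = x <;> simp [h]
  rw [this, Finset.sum_ite_eq' Finset.univ x (fun y => g y * (2:ℝ)^n)]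
  simp [mul_div_assoc]

lemma fCoeff_charSum {n : ℕ} (T : Finset (Finset (Fin n))) (c : Finset (Fin n) → ℝ)
    (S : Finset (Fin n)) :
    fCoeff (fun x => ∑ A ∈ T, c A * chi A x) S = if S ∈ T then c S else 0 := by
  rw [fCoeff]
  have : ∀ x : Fin n → Bool, (∑ A ∈ T, c A * chi A x) * chi S x
      = ∑ A ∈ T, c A * (chi A x * chi S x) := by
    intro x; rw [Finset.sum_mul]; congr 1; ext A; ring
  rw [Finset.sum_congr rfl (fun x _ => this x), Finset.sum_comm]
  have : ∀ A ∈ T, ∑ x : Fin n → Bool, c A * (chi A x * chi S x)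
      = c A * if A = S then (2:ℝ)^n else 0 := by
    intro A _
    rw [← Finset.mul_sum, sum_chi_mul_chi]
  rw [Finset.sum_congr rfl this]
  by_cases h : S ∈ T
  · rw [if_pos h, Finset.sum_eq_single S]
    · simp
    · intro A _ hA; simp [hA]
    · intro hS; exact absurd h hS
  · rw [if_neg h, Finset.sum_eq_zero, zero_div]
    intro A hA
    have : A ≠ S := fun he => h (he ▸ hA)
    simp [this]

lemma parseval_charSum {n : ℕ} (T : Finset (Finset (Fin n))) (c : Finset (Fin n) → ℝ) :
    ∑ x : Fin n → Bool, (∑ A ∈ T, c A * chi A x)^2 = 2^n * ∑ A ∈ T, (c A)^2 := by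
  have : ∀ x : Fin n → Bool, (∑ A ∈ T, c A * chi A x)^2
      = ∑ A ∈ T, ∑ B ∈ T, (c A * c B) * (chi A x * chi B x) := by
    intro x
    rw [sq, Finset.sum_mul_sum]
    congr 1; ext A; congr 1; ext B; ring
  rw [Finset.sum_congr rfl (fun x _ => this x), Finset.sum_comm]
  have : ∀ A ∈ T, ∑ x : Fin n → Bool, ∑ B ∈ T, (c A * c B) * (chi A x * chi B x)
      = (c A)^2 * 2^n := by
    intro A hA
    rw [Finset.sum_comm]
    have h2 : ∀ B ∈ T, ∑ x : Fin n → Bool, (c A * c B) * (chi A x * chi B x)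
        = (c A * c B) * if A = B then (2:ℝ)^n else 0 := by
      intro B _; rw [← Finset.mul_sum, sum_chi_mul_chi]
    rw [Finset.sum_congr rfl h2, Finset.sum_eq_single A]
    · simp [sq]
    · intro B _ hB; simp [Ne.symm hB]
    · intro h; exact absurd hA h
  rw [Finset.sum_congr rfl this, ← Finset.sum_mul]
  ring

lemma parseval {n : ℕ} (g : (Fin n → Bool) → ℝ) :
    (2:ℝ)^n * ∑ S : Finset (Fin n), fCoeff g S ^ 2 = ∑ x : Fin n → Bool, g x ^ 2 := by
  rw [← parseval_charSum Finset.univ (fCoeff g)]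
  congr 1; ext x
  rw [fourier_inversion]

lemma oneCert_le {m : ℕ} (g : (Fin m → Bool) → ℝ) (w : ℕ)
    (h : ∀ x, g x = -1 → ∃ B : Finset (Fin m), B.card ≤ w ∧
      ∀ y : Fin m → Bool, (∀ i ∈ B, y i = x i) → g y = g x) :
    oneCert g ≤ w := by
  apply Finset.sup_le
  intro x hx
  rw [Finset.mem_filter] at hx
  obtain ⟨B, hBc, hB⟩ := h x hx.2
  exact le_trans (Nat.sInf_le ⟨B, rfl, hB⟩) hBc

/-- Counting inputs agreeing with a partial assignment. -/
lemma count_agree {n : ℕ} (B : Finset (Fin n)) (v : Fin n → Bool) :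
    ∑ x : Fin n → Bool, (if ∀ i ∈ B, x i = v i then (1:ℝ) else 0)
      = 2^n / 2^(B.card) := by
  classical
  have key : ∀ x : Fin n → Bool, (if ∀ i ∈ B, x i = v i then (1:ℝ) else 0)
      = ∏ i : Fin n, (if i ∈ B then (if x i = v i then (1:ℝ) else 0) else 1) := by
    intro x
    by_cases h : ∀ i ∈ B, x i = v i
    · rw [if_pos h]
      exact (Finset.prod_eq_one (fun i hi => by
        by_cases hiB : i ∈ B <;> simp [hiB, h i])).symm
    · rw [if_neg h]
      push_neg at h
      obtain ⟨i, hi, hne⟩ := h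
      exact (Finset.prod_eq_zero (Finset.mem_univ i) (by simp [hi, hne])).symm
  simp only [key]
  rw [← Fintype.piFinset_univ, ← Finset.prod_univ_sum (fun _ => (Finset.univ : Finset Bool))
    (fun i b => if i ∈ B then (if b = v i then (1:ℝ) else 0) else 1)]
  have step : ∀ i : Fin n, (∑ b : Bool, (if i ∈ B then (if b = v i then (1:ℝ) else 0) else 1))
      = if i ∈ B then 1 else 2 := by
    intro i
    by_cases hi : i ∈ B <;> cases hv : v i <;> simp [hi, hv]
  rw [Finset.prod_congr rfl (fun i _ => step i), ← Finset.prod_mul_prod_compl B]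
  have h1 : (∏ i ∈ B, if i ∈ B then (1:ℝ) else 2) = 1 :=
    Finset.prod_eq_one (fun i hi => by simp [hi])
  have h2 : (∏ i ∈ Bᶜ, if i ∈ B then (1:ℝ) else 2) = 2 ^ (Bᶜ.card) :=
    Finset.prod_congr rfl (fun i hi => by simp [Finset.mem_compl.mp hi]) |>.trans
      (Finset.prod_const 2)
  rw [h1, h2, one_mul]
  have hcard : B.card + Bᶜ.card = n := by
    rw [Finset.card_add_card_compl]; simp
  rw [eq_div_iff (by positivity), ← pow_add]
  rw [add_comm, hcard]

/-- Suppose there is a constant `λ > 0` such that every Boolean function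
`g` (on any number of variables) satisfies `H(ĝ²) ≤ λ·C¹(g)`.  Then Mansour's conjecture
holds with explicit bounds: for every `t`-term DNF `f` (terms given by partial assignments
`(dom j, val j)`, value `-1` meaning TRUE) and every `ε ∈ (0,1)`, there is a multilinear
polynomial `p` with at most `(16t/ε)^{4λ/ε}` nonzero Fourier coefficients such that
`E_x[(f(x) - p(x))²] ≤ ε`. -/
theorem stmt11 (lam : ℝ) (hlam : 0 < lam)
    (hFEIcert : ∀ (m : ℕ) (g : (Fin m → Bool) → ℝ), IsBooleanFunc g →
      fEntropy g ≤ lam * (oneCert g : ℝ))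
    {n t : ℕ} (ht : 1 ≤ t)
    (f : (Fin n → Bool) → ℝ) (hf : IsBooleanFunc f)
    (dom : Fin t → Finset (Fin n)) (val : Fin t → Fin n → Bool)
    (hDNF : ∀ x, (f x = -1 ↔ ∃ j, ∀ i ∈ dom j, x i = val j i))
    (ε : ℝ) (hε0 : 0 < ε) (hε1 : ε < 1) :
    ∃ p : (Fin n → Bool) → ℝ,
      ((Finset.univ.filter (fun S : Finset (Fin n) => fCoeff p S ≠ 0)).card : ℝ)
          ≤ (16 * t / ε) ^ (4 * lam / ε) ∧
      (∑ x : Fin n → Bool, (f x - p x) ^ 2) / 2 ^ n ≤ ε := by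
  classical
  have ht' : (1:ℝ) ≤ (t:ℝ) := by exact_mod_cast ht
  set X : ℝ := 16 * t / ε with hXdef
  have hXpos : 0 < X := by positivity
  have hX16 : (16:ℝ) ≤ X := by
    rw [hXdef, le_div_iff₀ hε0]
    nlinarith
  have hX1 : (1:ℝ) < X := by linarith
  have hL0 : 0 < Real.logb 2 X := Real.logb_pos one_lt_two hX1
  set w : ℕ := ⌊Real.logb 2 X⌋₊ with hwdef
  have hw_le : (w:ℝ) ≤ Real.logb 2 X := Nat.floor_le hL0.le
  have hw_lt : Real.logb 2 X < (w:ℝ) + 1 := Nat.lt_floor_add_one _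
  have hXlt : X < 2 ^ (w + 1) := by
    have h1 : X = (2:ℝ) ^ (Real.logb 2 X) := (Real.rpow_logb two_pos (by norm_num) hXpos).symm
    have h2 : (2:ℝ) ^ (Real.logb 2 X) < (2:ℝ) ^ ((w:ℝ) + 1) :=
      (Real.rpow_lt_rpow_left_iff one_lt_two).mpr hw_lt
    have h3 : (2:ℝ) ^ ((w:ℝ) + 1) = (2:ℝ) ^ (w + 1) := by
      rw [show ((w:ℝ) + 1) = ((w + 1 : ℕ) : ℝ) by push_cast; ring, Real.rpow_natCast]
    rw [h1]; rw [h3] at h2; exact h2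
  -- the truncated DNF
  set J : Finset (Fin t) := Finset.univ.filter (fun j => (dom j).card ≤ w) with hJdef
  set f' : (Fin n → Bool) → ℝ :=
    fun x => if (∃ j ∈ J, ∀ i ∈ dom j, x i = val j i) then (-1:ℝ) else 1 with hf'def
  have hf'B : IsBooleanFunc f' := by
    intro x
    by_cases h : (∃ j ∈ J, ∀ i ∈ dom j, x i = val j i) <;> simp [hf'def, h]
  have hf'neg : ∀ x, f' x = -1 ↔ (∃ j ∈ J, ∀ i ∈ dom j, x i = val j i) := by
    intro x
    by_cases h : (∃ j ∈ J, ∀ i ∈ dom j, x i = val j i) <;> simp [hf'def, h] <;> norm_num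
  -- one-certificate bound
  have hC : oneCert f' ≤ w := by
    apply oneCert_le
    intro x hx
    obtain ⟨j, hjJ, hagree⟩ := (hf'neg x).mp hx
    refine ⟨dom j, (Finset.mem_filter.mp hjJ).2, ?_⟩
    intro y hy
    rw [hx, (hf'neg y).mpr ⟨j, hjJ, fun i hi => (hy i hi).trans (hagree i hi)⟩]
  have hH : fEntropy f' ≤ lam * Real.logb 2 X := by
    refine le_trans (hFEIcert n f' hf'B) ?_
    have : (oneCert f' : ℝ) ≤ Real.logb 2 X :=
      le_trans (by exact_mod_cast hC) hw_le
    exact mul_le_mul_of_nonneg_left this hlam.le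
  -- Parseval for f'
  have h2n : (0:ℝ) < 2 ^ n := by positivity
  have hP : ∑ S : Finset (Fin n), fCoeff f' S ^ 2 = 1 := by
    have := parseval f'
    have hx2 : ∀ x : Fin n → Bool, f' x ^ 2 = 1 := by
      intro x; rcases hf'B x with h | h <;> rw [h] <;> norm_num
    rw [Finset.sum_congr rfl (fun x _ => hx2 x), Finset.sum_const] at this
    simp only [Finset.card_univ, Fintype.card_fun, Fintype.card_fin, Fintype.card_bool,
      nsmul_eq_mul, mul_one] at this
    field_simp at this ⊢
    push_cast at this; exact mul_left_cancel₀ h2n.ne' (this.trans (mul_one _).symm)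
  have hle1 : ∀ S : Finset (Fin n), fCoeff f' S ^ 2 ≤ 1 := by
    intro S
    rw [← hP]
    exact Finset.single_le_sum (f := fun A => fCoeff f' A ^ 2)
      (fun A _ => sq_nonneg _) (Finset.mem_univ S)
  -- the threshold
  set M : ℝ := X ^ (4 * lam / ε) with hMdef
  have hr0 : 0 < 4 * lam / ε := by positivity
  have hM1 : (1:ℝ) < M := Real.one_lt_rpow_iff_of_pos hXpos |>.mpr (Or.inl ⟨hX1, hr0⟩)
  have hM0 : (0:ℝ) < M := lt_trans one_pos hM1
  have hlogM : Real.logb 2 M = (4 * lam / ε) * Real.logb 2 X := by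
    rw [hMdef, Real.logb, Real.log_rpow hXpos, Real.logb]
    ring
  have hlogM0 : 0 < Real.logb 2 M := by
    rw [hlogM]; positivity
  set T : Finset (Finset (Fin n)) :=
    Finset.univ.filter (fun S => M⁻¹ ≤ fCoeff f' S ^ 2) with hTdef
  refine ⟨fun x => ∑ S ∈ T, fCoeff f' S * chi S x, ?_, ?_⟩
  · -- sparsity
    have hco := fCoeff_charSum T (fCoeff f')
    have hsub : Finset.univ.filter
        (fun S : Finset (Fin n) => fCoeff (fun x => ∑ A ∈ T, fCoeff f' A * chi A x) S ≠ 0) ⊆ T := by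
      intro S hS
      rw [Finset.mem_filter] at hS
      by_contra hST
      exact hS.2 (by rw [hco S, if_neg hST])
    have hTcard : (T.card : ℝ) * M⁻¹ ≤ 1 := by
      calc (T.card : ℝ) * M⁻¹ = ∑ _S ∈ T, M⁻¹ := by rw [Finset.sum_const, nsmul_eq_mul]
        _ ≤ ∑ S ∈ T, fCoeff f' S ^ 2 :=
          Finset.sum_le_sum (fun S hS => (Finset.mem_filter.mp hS).2)
        _ ≤ ∑ S : Finset (Fin n), fCoeff f' S ^ 2 :=
          Finset.sum_le_sum_of_subset_of_nonneg (Finset.subset_univ T)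
            (fun S _ _ => sq_nonneg _)
        _ = 1 := hP
    have hTM : (T.card : ℝ) ≤ M := by
      rw [mul_inv_le_iff₀ hM0, one_mul] at hTcard
      exact hTcard
    calc ((Finset.univ.filter (fun S : Finset (Fin n) =>
            fCoeff (fun x => ∑ A ∈ T, fCoeff f' A * chi A x) S ≠ 0)).card : ℝ)
        ≤ (T.card : ℝ) := by exact_mod_cast Finset.card_le_card hsub
      _ ≤ M := hTM
  · -- approximation error
    -- (A) truncation error
    have hA : ∑ x : Fin n → Bool, (f x - f' x) ^ 2 ≤ ε / 4 * 2 ^ n := by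
      have hpt : ∀ x : Fin n → Bool, (f x - f' x) ^ 2 ≤
          ∑ j ∈ Jᶜ, (4:ℝ) * (if ∀ i ∈ dom j, x i = val j i then 1 else 0) := by
        intro x
        by_cases heq : f x = f' x
        · rw [heq, sub_self]
          have hz : (0:ℝ) ^ 2 = 0 := by norm_num
          rw [hz]
          exact Finset.sum_nonneg (fun j _ => by positivity)
        · -- they differ: f x = -1, f' x = 1, some wide term fires
          have hfx : f x = -1 := by
            rcases hf x with h1 | h1
            · rcases hf'B x with h2 | h2
              · exact absurd (h1.trans h2.symm) heq
              · -- f x = 1, f' x = -1 impossible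
                obtain ⟨j, hjJ, hagree⟩ := (hf'neg x).mp h2
                have := (hDNF x).mpr ⟨j, hagree⟩
                rw [h1] at this; norm_num at this
            · exact h1
          have hf'x : f' x = 1 := by
            rcases hf'B x with h2 | h2
            · exact h2
            · exact absurd (hfx.trans h2.symm) heq
          obtain ⟨j, hagree⟩ := (hDNF x).mp hfx
          have hjJ : j ∈ Jᶜ := by
            rw [Finset.mem_compl]
            intro hj
            have := (hf'neg x).mpr ⟨j, hj, hagree⟩
            rw [hf'x] at this; norm_num at this
          have hLHS : (f x - f' x) ^ 2 = 4 := by rw [hfx, hf'x]; norm_num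
          rw [hLHS]
          refine le_trans (le_of_eq ?_) (Finset.single_le_sum
            (f := fun k => (4:ℝ) * (if ∀ i ∈ dom k, x i = val k i then 1 else 0))
            (fun k _ => by positivity) hjJ)
          simp only [if_pos hagree]
          norm_num
      calc ∑ x : Fin n → Bool, (f x - f' x) ^ 2
          ≤ ∑ x : Fin n → Bool, ∑ j ∈ Jᶜ, (4:ℝ) * (if ∀ i ∈ dom j, x i = val j i then 1 else 0) :=
            Finset.sum_le_sum (fun x _ => hpt x)
        _ = ∑ j ∈ Jᶜ, (4:ℝ) * (2 ^ n / 2 ^ (dom j).card) := by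
            rw [Finset.sum_comm]
            refine Finset.sum_congr rfl (fun j _ => ?_)
            rw [← Finset.mul_sum, count_agree]
        _ ≤ ∑ j ∈ Jᶜ, (4:ℝ) * (2 ^ n / X) := by
            refine Finset.sum_le_sum (fun j hj => ?_)
            have hjw : w + 1 ≤ (dom j).card := by
              rw [Finset.mem_compl, hJdef, Finset.mem_filter] at hj
              push_neg at hj
              exact hj (Finset.mem_univ j)
            have h2c : X ≤ 2 ^ (dom j).card := by
              calc X ≤ 2 ^ (w+1) := hXlt.le
                _ ≤ (2:ℝ) ^ (dom j).card := by
                  exact pow_le_pow_right₀ one_le_two hjw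
            have : (2:ℝ) ^ n / 2 ^ (dom j).card ≤ 2 ^ n / X :=
              div_le_div_of_nonneg_left h2n.le hXpos h2c
            linarith
        _ ≤ (t:ℝ) * (4 * (2 ^ n / X)) := by
            rw [Finset.sum_const, nsmul_eq_mul]
            have hc : ((Jᶜ).card : ℝ) ≤ (t:ℝ) := by
              exact_mod_cast le_trans (Finset.card_le_card (Finset.subset_univ _))
                (le_of_eq (by simp))
            exact mul_le_mul_of_nonneg_right hc (by positivity)
        _ = ε / 4 * 2 ^ n := by
            rw [hXdef]
            field_simp
            ring
    -- (B) tail error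
    have hB : ∑ S ∈ Tᶜ, fCoeff f' S ^ 2 ≤ ε / 4 := by
      have hterm : ∀ S ∈ Tᶜ, Real.logb 2 M * fCoeff f' S ^ 2
          ≤ fCoeff f' S ^ 2 * Real.logb 2 (1 / fCoeff f' S ^ 2) := by
        intro S hS
        rw [Finset.mem_compl, hTdef, Finset.mem_filter] at hS
        push_neg at hS
        have hSlt : fCoeff f' S ^ 2 < M⁻¹ := hS (Finset.mem_univ S)
        by_cases h0 : fCoeff f' S = 0
        · rw [h0]; norm_num
        · have hpos : 0 < fCoeff f' S ^ 2 := by positivity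
          have h1 : M < 1 / fCoeff f' S ^ 2 := by
            rw [lt_div_iff₀ hpos]
            calc M * fCoeff f' S ^ 2 < M * M⁻¹ := by
                  exact mul_lt_mul_of_pos_left hSlt hM0
              _ = 1 := mul_inv_cancel₀ (ne_of_gt hM0)
          have h2 : Real.logb 2 M ≤ Real.logb 2 (1 / fCoeff f' S ^ 2) :=
            Real.logb_le_logb_of_le one_lt_two hM0 h1.le
          calc Real.logb 2 M * fCoeff f' S ^ 2
              ≤ Real.logb 2 (1 / fCoeff f' S ^ 2) * fCoeff f' S ^ 2 :=
                mul_le_mul_of_nonneg_right h2 hpos.le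
            _ = fCoeff f' S ^ 2 * Real.logb 2 (1 / fCoeff f' S ^ 2) := mul_comm _ _
      have hentnn : ∀ S : Finset (Fin n),
          0 ≤ fCoeff f' S ^ 2 * Real.logb 2 (1 / fCoeff f' S ^ 2) := by
        intro S
        by_cases h0 : fCoeff f' S = 0
        · rw [h0]; norm_num
        · have hpos : 0 < fCoeff f' S ^ 2 := by positivity
          have h1 : (1:ℝ) ≤ 1 / fCoeff f' S ^ 2 := by
            rw [le_div_iff₀ hpos, one_mul]; exact hle1 S
          exact mul_nonneg hpos.le (Real.logb_nonneg one_lt_two h1)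
      have hchain : Real.logb 2 M * ∑ S ∈ Tᶜ, fCoeff f' S ^ 2 ≤ lam * Real.logb 2 X := by
        calc Real.logb 2 M * ∑ S ∈ Tᶜ, fCoeff f' S ^ 2
            = ∑ S ∈ Tᶜ, Real.logb 2 M * fCoeff f' S ^ 2 := Finset.mul_sum _ _ _
          _ ≤ ∑ S ∈ Tᶜ, fCoeff f' S ^ 2 * Real.logb 2 (1 / fCoeff f' S ^ 2) :=
              Finset.sum_le_sum hterm
          _ ≤ ∑ S : Finset (Fin n), fCoeff f' S ^ 2 * Real.logb 2 (1 / fCoeff f' S ^ 2) :=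
              Finset.sum_le_sum_of_subset_of_nonneg (Finset.subset_univ _)
                (fun S _ _ => hentnn S)
          _ = fEntropy f' := rfl
          _ ≤ lam * Real.logb 2 X := hH
      have hfinal : lam * Real.logb 2 X = Real.logb 2 M * (ε / 4) := by
        rw [hlogM]
        field_simp
      rw [hfinal] at hchain
      exact le_of_mul_le_mul_left (by linarith [hchain]) hlogM0
    have hB' : ∑ x : Fin n → Bool, (f' x - (∑ S ∈ T, fCoeff f' S * chi S x)) ^ 2
        ≤ ε / 4 * 2 ^ n := by
      have hdiff : ∀ x : Fin n → Bool,
          f' x - (∑ S ∈ T, fCoeff f' S * chi S x) = ∑ S ∈ Tᶜ, fCoeff f' S * chi S x := by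
        intro x
        have := Finset.sum_add_sum_compl T (fun S => fCoeff f' S * chi S x)
        rw [← fourier_inversion f' x]
        linarith [this]
      rw [Finset.sum_congr rfl (fun x _ => by rw [hdiff x]), parseval_charSum]
      calc (2:ℝ)^n * ∑ S ∈ Tᶜ, fCoeff f' S ^ 2 ≤ (2:ℝ)^n * (ε/4) :=
            mul_le_mul_of_nonneg_left hB h2n.le
        _ = ε / 4 * 2 ^ n := mul_comm _ _
    -- combine
    rw [div_le_iff₀ h2n]
    have hpt2 : ∀ x : Fin n → Bool,
        (f x - (∑ S ∈ T, fCoeff f' S * chi S x)) ^ 2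
          ≤ 2 * (f x - f' x) ^ 2 + 2 * (f' x - (∑ S ∈ T, fCoeff f' S * chi S x)) ^ 2 := by
      intro x; nlinarith [sq_nonneg (f x - 2 * f' x + (∑ S ∈ T, fCoeff f' S * chi S x))]
    calc ∑ x : Fin n → Bool, (f x - (∑ S ∈ T, fCoeff f' S * chi S x)) ^ 2
        ≤ ∑ x : Fin n → Bool, (2 * (f x - f' x) ^ 2
            + 2 * (f' x - (∑ S ∈ T, fCoeff f' S * chi S x)) ^ 2) :=
          Finset.sum_le_sum (fun x _ => hpt2 x)
      _ = 2 * (∑ x : Fin n → Bool, (f x - f' x) ^ 2)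
            + 2 * (∑ x : Fin n → Bool, (f' x - (∑ S ∈ T, fCoeff f' S * chi S x)) ^ 2) := by
          rw [Finset.sum_add_distrib, Finset.mul_sum, Finset.mul_sum]
      _ ≤ 2 * (ε / 4 * 2 ^ n) + 2 * (ε / 4 * 2 ^ n) := by
          have := hA; have := hB'
          gcongr
      _ = ε * 2 ^ n := by ring
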